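/- Let P be the orthogonal projection onto a subspace V of ℝ^m and P^⊥ = I − P. Then for any y ∈ ℝ^m and any vector φ, ‖P_{V+span(φ)} y‖₂² = ‖P y‖₂² + |⟨φ, P^⊥ y⟩|² / ‖P^⊥ φ‖₂², provided P^⊥ φ ≠ 0, where P_{V+span(φ)} is the orthogonal projection onto V + span(φ). -/

import Mathlib

open RealInnerProductSpace

/-- Key projection identity behind the MOLS selection rule:
`‖P_{V+span(φ)} y‖² = ‖P_V y‖² + ⟨φ, P_V^⊥ y⟩² / ‖P_V^⊥ φ‖²`. -/
theorem proj_enlarged_norm_sq {m : ℕ} (V : Submodule ℝ (EuclideanSpace ℝ (Fin m)))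
    (y φ : EuclideanSpace ℝ (Fin m))
    (hφ : φ - (V.orthogonalProjectionOnto φ : EuclideanSpace ℝ (Fin m)) ≠ 0) :
    ‖((V ⊔ Submodule.span ℝ {φ}).orthogonalProjectionOnto y : EuclideanSpace ℝ (Fin m))‖ ^ 2 =
      ‖(V.orthogonalProjectionOnto y : EuclideanSpace ℝ (Fin m))‖ ^ 2 +
        ⟪φ, y - (V.orthogonalProjectionOnto y : EuclideanSpace ℝ (Fin m))⟫ ^ 2 /
          ‖φ - (V.orthogonalProjectionOnto φ : EuclideanSpace ℝ (Fin m))‖ ^ 2 := by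
  set Py : EuclideanSpace ℝ (Fin m) := ↑(V.orthogonalProjectionOnto y) with hPy
  set Pφ : EuclideanSpace ℝ (Fin m) := ↑(V.orthogonalProjectionOnto φ) with hPφ
  set ψ : EuclideanSpace ℝ (Fin m) := φ - Pφ with hψ
  have hψV : ψ ∈ Vᗮ := Submodule.sub_starProjection_mem_orthogonal (K := V) φ
  have hψ0 : ‖ψ‖ ≠ 0 := norm_ne_zero_iff.mpr hφ
  set t : ℝ := ⟪ψ, y⟫ / (‖ψ‖ ^ 2) with ht
  set c : EuclideanSpace ℝ (Fin m) := Py + t • ψ with hc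
  have hPyV : Py ∈ V := (V.orthogonalProjectionOnto y).2
  have hPφV : Pφ ∈ V := (V.orthogonalProjectionOnto φ).2
  have hyPy : y - Py ∈ Vᗮ := Submodule.sub_starProjection_mem_orthogonal (K := V) y
  have hyc : y - c = (y - Py) - t • ψ := by rw [hc]; abel
  -- ⟪y - c, v⟫ = 0 for v ∈ V
  have hV0 : ∀ v ∈ V, ⟪y - c, v⟫ = 0 := by
    intro v hv
    have h1 : ⟪v, y - Py⟫ = 0 := hyPy v hv
    have h2 : ⟪v, ψ⟫ = 0 := hψV v hv
    rw [real_inner_comm] at h1 h2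
    rw [hyc, inner_sub_left, inner_smul_left, h1, h2]; ring
  have hψ20 : ⟪y - c, ψ⟫ = 0 := by
    have hPy2 : ⟪Py, ψ⟫ = 0 := hψV Py hPyV
    have hy1 : ⟪y - Py, ψ⟫ = ⟪ψ, y⟫ := by
      rw [inner_sub_left, real_inner_comm y ψ, hPy2, sub_zero]
    rw [hyc, inner_sub_left, real_inner_smul_left, hy1, real_inner_self_eq_norm_sq, ht]
    field_simp
    ring
  have hφ0 : ⟪y - c, φ⟫ = 0 := by
    have hφc : φ = Pφ + ψ := by rw [hψ]; abel
    rw [hφc, inner_add_right, hV0 Pφ hPφV, hψ20]; ring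
  have hinner : ∀ w ∈ (V ⊔ Submodule.span ℝ {φ} : Submodule ℝ _), ⟪y - c, w⟫ = 0 := by
    intro w hw
    rcases Submodule.mem_sup.mp hw with ⟨v, hv, u, hu, rfl⟩
    rcases Submodule.mem_span_singleton.mp hu with ⟨a, rfl⟩
    rw [inner_add_right, inner_smul_right, hV0 v hv, hφ0]; ring
  have hcW : c ∈ V ⊔ Submodule.span ℝ {φ} := by
    apply Submodule.add_mem
    · exact Submodule.mem_sup_left hPyV
    · have hφmem : φ ∈ V ⊔ Submodule.span ℝ {φ} :=
        Submodule.mem_sup_right (Submodule.mem_span_singleton_self φ)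
      have hPφmem : Pφ ∈ V ⊔ Submodule.span ℝ {φ} := Submodule.mem_sup_left hPφV
      exact Submodule.smul_mem _ t (Submodule.sub_mem _ hφmem hPφmem)
  have hproj : ((V ⊔ Submodule.span ℝ {φ}).orthogonalProjectionOnto y : EuclideanSpace ℝ (Fin m)) = c :=
    Submodule.eq_starProjection_of_mem_of_inner_eq_zero hcW hinner
  rw [hproj]
  have horth : ⟪Py, t • ψ⟫ = 0 := by
    rw [inner_smul_right, hψV Py hPyV]; ring
  have hnorm : ‖c‖ ^ 2 = ‖Py‖ ^ 2 + ‖t • ψ‖ ^ 2 := by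
    rw [hc, norm_add_sq_real, horth]; ring
  have hφinner : ⟪φ, y - Py⟫ = ⟪ψ, y⟫ := by
    have hφc : φ = Pφ + ψ := by rw [hψ]; abel
    have h1 : ⟪Pφ, y - Py⟫ = 0 := hyPy Pφ hPφV
    have h2 : ⟪ψ, Py⟫ = 0 := by
      have := hψV Py hPyV; rwa [real_inner_comm] at this
    rw [hφc, inner_add_left, h1, inner_sub_right, h2]; ring
  rw [hnorm, hφinner, norm_smul, ht]
  have h : ‖ψ‖ ^ 2 ≠ 0 := pow_ne_zero 2 hψ0
  rw [Real.norm_eq_abs, mul_pow, sq_abs]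
  field_simp
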